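/- Let n ≥ 2, l > 0, and let φ : [−l, l] → ℝ be a positive C² function satisfying −2(n−1)·φ″(t)/φ(t) − (n−1)(n−2)·(φ′(t)/φ(t))² ≥ n(n−1) for all t ∈ [−l, l]. Then 2l < 2π/n. -/

import Mathlib

/-- Warped product width bound: a positive C² function φ on `[-l, l]` with
`-2(n-1) φ''/φ - (n-1)(n-2)(φ'/φ)² ≥ n(n-1)` forces `2l < 2π/n`. -/
theorem warped_product_width (n : ℕ) (hn : 2 ≤ n) (l : ℝ) (hl : 0 < l)
    (φ φ' φ'' : ℝ → ℝ)
    (hpos : ∀ t ∈ Set.Icc (-l) l, 0 < φ t)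
    (h1 : ∀ t ∈ Set.Icc (-l) l, HasDerivAt φ (φ' t) t)
    (h2 : ∀ t ∈ Set.Icc (-l) l, HasDerivAt φ' (φ'' t) t)
    (hcont : ContinuousOn φ'' (Set.Icc (-l) l))
    (hsc : ∀ t ∈ Set.Icc (-l) l,
      (n : ℝ) * ((n : ℝ) - 1) ≤
        -2 * ((n : ℝ) - 1) * (φ'' t / φ t) -
          ((n : ℝ) - 1) * ((n : ℝ) - 2) * (φ' t / φ t) ^ 2) :
    2 * l < 2 * Real.pi / n := by
  have hn1 : (0:ℝ) < (n:ℝ) - 1 := by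
    have : (2:ℝ) ≤ n := by exact_mod_cast hn
    linarith
  have hn0 : (0:ℝ) < n := by positivity
  set f : ℝ → ℝ := fun t => φ' t / φ t with hf
  set g : ℝ → ℝ := fun t => Real.arctan (f t) + ((n:ℝ)/2) * t with hg
  set D : ℝ → ℝ := fun t =>
    1 / (1 + f t ^ 2) * ((φ'' t * φ t - φ' t * φ' t) / φ t ^ 2) + (n:ℝ)/2 * 1 with hD
  have hderiv : ∀ t ∈ Set.Icc (-l) l, HasDerivAt g (D t) t := by
    intro t ht
    have hne : φ t ≠ 0 := ne_of_gt (hpos t ht)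
    have hfd : HasDerivAt f ((φ'' t * φ t - φ' t * φ' t) / φ t ^ 2) t :=
      (h2 t ht).div (h1 t ht) hne
    have harc : HasDerivAt (fun s => Real.arctan (f s))
        (1 / (1 + f t ^ 2) * ((φ'' t * φ t - φ' t * φ' t) / φ t ^ 2)) t :=
      (Real.hasDerivAt_arctan (f t)).comp t hfd
    exact harc.add ((hasDerivAt_id t).const_mul ((n:ℝ)/2))
  have hDle : ∀ t ∈ Set.Icc (-l) l, D t ≤ 0 := by
    intro t ht
    have hp : 0 < φ t := hpos t ht
    have hkey := hsc t ht
    set u : ℝ := φ' t / φ t with hu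
    have h1u : (0:ℝ) < 1 + u ^ 2 := by positivity
    -- divide hkey by (n-1): n ≤ -2 (φ''/φ) - (n-2) u²
    have hkey2 : (n:ℝ) ≤ -2 * (φ'' t / φ t) - ((n:ℝ) - 2) * u ^ 2 := by
      nlinarith [hkey, hn1]
    have hquot : (φ'' t * φ t - φ' t * φ' t) / φ t ^ 2 = φ'' t / φ t - u ^ 2 := by
      field_simp [hu]
      have key : φ t * (φ t * (φ' t ^ 2 / φ t ^ 2)) = φ' t ^ 2 := by
        rw [← mul_assoc, ← sq, mul_div_cancel₀ _ (pow_ne_zero 2 hp.ne')]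
      linear_combination key
    have hfu : f t = u := rfl
    rw [hD]
    simp only [hfu, hquot]
    rw [div_mul_eq_mul_div, one_mul]
    have hnum : φ'' t / φ t - u ^ 2 ≤ -((n:ℝ)/2) * (1 + u ^ 2) := by nlinarith
    have : (φ'' t / φ t - u ^ 2) / (1 + u ^ 2) ≤ -((n:ℝ)/2) := by
      rw [div_le_iff₀ h1u]
      nlinarith
    linarith
  have hcontg : ContinuousOn g (Set.Icc (-l) l) :=
    fun x hx => ((hderiv x hx).continuousAt).continuousWithinAt
  have hanti : AntitoneOn g (Set.Icc (-l) l) := by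
    apply antitoneOn_of_deriv_nonpos (convex_Icc _ _) hcontg
    · intro x hx
      rw [interior_Icc] at hx
      exact ((hderiv x (Set.mem_Icc_of_Ioo hx)).differentiableAt).differentiableWithinAt
    · intro x hx
      rw [interior_Icc] at hx
      rw [(hderiv x (Set.mem_Icc_of_Ioo hx)).deriv]
      exact hDle x (Set.mem_Icc_of_Ioo hx)
  have hmem1 : (-l) ∈ Set.Icc (-l) l := by constructor <;> linarith
  have hmem2 : l ∈ Set.Icc (-l) l := by constructor <;> linarith
  have hgl : g l ≤ g (-l) := hanti hmem1 hmem2 (by linarith)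
  have hA : Real.arctan (f (-l)) < Real.pi / 2 := Real.arctan_lt_pi_div_two _
  have hB : -(Real.pi / 2) < Real.arctan (f l) := Real.neg_pi_div_two_lt_arctan _
  have hnl : (n:ℝ) * l < Real.pi := by
    have : Real.arctan (f l) + ((n:ℝ)/2) * l ≤ Real.arctan (f (-l)) + ((n:ℝ)/2) * (-l) := hgl
    nlinarith
  rw [lt_div_iff₀ hn0]
  nlinarith
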